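/- Let π(u) = e^u/(1+e^u). For all real u and h, log((1+e^{u+h})/(1+e^u)) = π(u)h + (1/2)π(u)(1-π(u))h² + (1/6)π(u)(1-π(u))γ(u,h)h³ for some γ(u,h) with |γ(u,h)| ≤ e^{|h|}. -/

import Mathlib

open Real Set Topology

lemma taylor3 (f f1 f2 f3 : ℝ → ℝ)
    (hd1 : ∀ x, HasDerivAt f (f1 x) x)
    (hd2 : ∀ x, HasDerivAt f1 (f2 x) x)
    (hd3 : ∀ x, HasDerivAt f2 (f3 x) x)
    (x₀ x : ℝ) (hx : x₀ < x) :
    ∃ c ∈ Set.Ioo x₀ x,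
      f x = f x₀ + f1 x₀ * (x - x₀) + f2 x₀ / 2 * (x - x₀) ^ 2
        + f3 c / 6 * (x - x₀) ^ 3 := by
  set s := Set.Icc x₀ x with hs
  have hu : UniqueDiffOn ℝ s := uniqueDiffOn_Icc hx
  have hdf : Differentiable ℝ f := fun y => (hd1 y).differentiableAt
  have hdf1 : Differentiable ℝ f1 := fun y => (hd2 y).differentiableAt
  have hdf2 : Differentiable ℝ f2 := fun y => (hd3 y).differentiableAt
  have e1 : deriv f = f1 := funext fun y => (hd1 y).deriv
  have e2 : deriv f1 = f2 := funext fun y => (hd2 y).deriv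
  have hcd : ContDiff ℝ 2 f := by
    rw [show (2 : WithTop ℕ∞) = 1 + 1 from by norm_num, contDiff_succ_iff_deriv]
    refine ⟨hdf, by simp, ?_⟩
    rw [e1, show (1 : WithTop ℕ∞) = 0 + 1 from by norm_num, contDiff_succ_iff_deriv]
    refine ⟨hdf1, by simp, ?_⟩
    rw [e2, contDiff_zero]
    exact hdf2.continuous
  have eq1 : Set.EqOn (iteratedDerivWithin 1 f s) f1 s := fun z hz => by
    rw [iteratedDerivWithin_one]
    exact ((hd1 z).hasDerivWithinAt).derivWithin (hu z hz)
  have eq2 : Set.EqOn (iteratedDerivWithin 2 f s) f2 s := by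
    intro y hy
    rw [show (2:ℕ) = 1 + 1 from rfl, iteratedDerivWithin_succ,
      derivWithin_congr eq1 (eq1 hy)]
    exact ((hd2 y).hasDerivWithinAt).derivWithin (hu y hy)
  have hf' : DifferentiableOn ℝ (iteratedDerivWithin 2 f s) (Set.Ioo x₀ x) :=
    (hdf2.differentiableOn).congr (eq2.mono Set.Ioo_subset_Icc_self)
  obtain ⟨c, hc, hT⟩ := taylor_mean_remainder_lagrange (n := 2) hx.ne (by rw [uIcc_of_le hx.le]; exact_mod_cast hcd.contDiffOn) (by rw [uIcc_of_le hx.le, uIoo_of_le hx.le]; exact hf')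
  rw [uIoo_of_le hx.le] at hc
  rw [uIcc_of_le hx.le, ← hs] at hT
  have hnc : s ∈ 𝓝 c := Icc_mem_nhds hc.1 hc.2
  have h3c : iteratedDerivWithin 3 f s c = f3 c := by
    rw [show (3:ℕ) = 2 + 1 from rfl, iteratedDerivWithin_succ,
      derivWithin_of_mem_nhds hnc, (Filter.eventuallyEq_of_mem hnc eq2).deriv_eq]
    exact (hd3 c).deriv
  have hx₀ : x₀ ∈ s := Set.left_mem_Icc.2 hx.le
  have hTP : taylorWithinEval f 2 s x₀ x
      = f x₀ + f1 x₀ * (x - x₀) + f2 x₀ / 2 * (x - x₀) ^ 2 := by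
    rw [taylor_within_apply]
    have i0 : iteratedDerivWithin 0 f s x₀ = f x₀ := by rw [iteratedDerivWithin_zero]
    have i1 := eq1 hx₀
    have i2 := eq2 hx₀
    simp [Finset.sum_range_succ, i0, i1, i2, Nat.factorial]
    ring
  refine ⟨c, hc, ?_⟩
  rw [hTP, h3c] at hT
  norm_num [Nat.factorial] at hT
  linarith

noncomputable def lf (x : ℝ) : ℝ := Real.log (1 + Real.exp x)
noncomputable def lf1 (x : ℝ) : ℝ := Real.exp x / (1 + Real.exp x)
noncomputable def lf2 (x : ℝ) : ℝ := Real.exp x / (1 + Real.exp x) ^ 2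
noncomputable def lf3 (x : ℝ) : ℝ := Real.exp x * (1 - Real.exp x) / (1 + Real.exp x) ^ 3

lemma one_add_exp_pos (x : ℝ) : 0 < 1 + Real.exp x := by positivity

lemma hd1 (x : ℝ) : HasDerivAt lf (lf1 x) x := by
  have h := ((Real.hasDerivAt_exp x).const_add 1).log (one_add_exp_pos x).ne'
  exact h

lemma hd2 (x : ℝ) : HasDerivAt lf1 (lf2 x) x := by
  have h := (Real.hasDerivAt_exp x).div ((Real.hasDerivAt_exp x).const_add 1)
    (one_add_exp_pos x).ne'
  refine h.congr_deriv ?_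
  have := (one_add_exp_pos x).ne'
  rw [lf2]; field_simp
  ring

lemma hd3 (x : ℝ) : HasDerivAt lf2 (lf3 x) x := by
  have hpow : HasDerivAt (fun y => (1 + Real.exp y) ^ 2)
      (2 * (1 + Real.exp x) ^ 1 * Real.exp x) x :=
    ((Real.hasDerivAt_exp x).const_add 1).pow 2
  have h := (Real.hasDerivAt_exp x).div hpow (by positivity)
  refine h.congr_deriv ?_
  have := (one_add_exp_pos x).ne'
  rw [lf3]; field_simp
  ring

-- ratio bound for lf2
lemma lf2_ratio (a b : ℝ) : lf2 a ≤ Real.exp |a - b| * lf2 b := by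
  have pa := Real.exp_pos a
  have pb := Real.exp_pos b
  have ha := one_add_exp_pos a
  have hb := one_add_exp_pos b
  rw [lf2, lf2, mul_div_assoc' _ _ _, div_le_div_iff₀ (by positivity) (by positivity)]
  rcases le_total b a with hab | hab
  · rw [abs_of_nonneg (by linarith)]
    have he : Real.exp (a - b) * Real.exp b = Real.exp a := by
      rw [← Real.exp_add]; ring_nf
    have hba : Real.exp b ≤ Real.exp a := Real.exp_le_exp.2 hab
    rw [he]
    have : (1 + Real.exp b) ^ 2 ≤ (1 + Real.exp a) ^ 2 := by nlinarith
    nlinarith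
  · rw [abs_of_nonpos (by linarith), neg_sub]
    have he : Real.exp (b - a) * Real.exp a = Real.exp b := by
      rw [← Real.exp_add]; ring_nf
    have hba : Real.exp a ≤ Real.exp b := Real.exp_le_exp.2 hab
    have key : Real.exp a * (1 + Real.exp b) ≤ Real.exp b * (1 + Real.exp a) := by nlinarith
    have key2 : (Real.exp a * (1 + Real.exp b)) ^ 2 ≤ (Real.exp b * (1 + Real.exp a)) ^ 2 :=
      pow_le_pow_left₀ (by positivity) key 2
    have hrw : Real.exp (b - a) = Real.exp b / Real.exp a := Real.exp_sub b a
    rw [hrw, div_mul_eq_mul_div, div_mul_eq_mul_div, le_div_iff₀ pa]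
    nlinarith [key2]

lemma lf3_abs_le (c : ℝ) : |lf3 c| ≤ lf2 c := by
  have pc := Real.exp_pos c
  have hc := one_add_exp_pos c
  rw [lf3, lf2, abs_div, abs_mul, abs_of_pos pc, abs_of_pos (by positivity : (0:ℝ) < (1 + Real.exp c) ^ 3)]
  rw [div_le_div_iff₀ (by positivity) (by positivity)]
  have h1 : |1 - Real.exp c| ≤ 1 + Real.exp c := by
    rw [abs_le]; constructor <;> linarith
  nlinarith [mul_le_mul_of_nonneg_right (mul_le_mul_of_nonneg_left h1 pc.le)
    (sq_nonneg (1 + Real.exp c))]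

lemma reflect (g g' : ℝ → ℝ) (hg : ∀ x, HasDerivAt g (g' x) x) (u : ℝ) :
    ∀ x, HasDerivAt (fun x => g (2 * u - x)) (-(g' (2 * u - x))) x := fun x => by
  have hinner : HasDerivAt (fun x : ℝ => 2 * u - x) (-1) x := (hasDerivAt_id x).const_sub (2 * u)
  simpa [Function.comp_def] using (hg (2 * u - x)).comp x hinner

/-- Logistic expansion (5.2) of Hjort–Pollard: with `pi(u) = eᵘ/(1+eᵘ)`,
`log((1+e^{u+h})/(1+eᵘ)) = pi(u)h + ½pi(u)(1-pi(u))h² + ⅙pi(u)(1-pi(u))γ h³`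
for some `γ = γ(u,h)` with `|γ| ≤ e^{|h|}`. -/
theorem logistic_expansion (pi : ℝ → ℝ) (hpi : ∀ u, pi u = exp u / (1 + exp u)) :
    ∀ u h : ℝ, ∃ γ : ℝ, |γ| ≤ exp |h| ∧
      log ((1 + exp (u + h)) / (1 + exp u)) =
        pi u * h + (1/2) * (pi u * (1 - pi u)) * h ^ 2
          + (1/6) * (pi u * (1 - pi u)) * γ * h ^ 3 := by
  intro u h
  rcases eq_or_ne h 0 with rfl | hne
  · refine ⟨0, by norm_num [Real.exp_nonneg], ?_⟩
    norm_num [div_self (one_add_exp_pos u).ne']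
  · have hmain : ∃ c : ℝ, |c - u| ≤ |h| ∧
        lf (u + h) = lf u + lf1 u * h + lf2 u / 2 * h ^ 2 + lf3 c / 6 * h ^ 3 := by
      rcases lt_or_gt_of_ne hne with hneg | hpos
      · have refl1 : ∀ x, HasDerivAt (fun x => lf (2 * u - x)) (-(lf1 (2 * u - x))) x :=
          reflect lf lf1 hd1 u
        have refl2 : ∀ x, HasDerivAt (fun x => -(lf1 (2 * u - x))) (lf2 (2 * u - x)) x :=
          fun x => by simpa [Pi.neg_def] using (reflect lf1 lf2 hd2 u x).neg
        have refl3 : ∀ x, HasDerivAt (fun x => lf2 (2 * u - x)) (-(lf3 (2 * u - x))) x :=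
          reflect lf2 lf3 hd3 u
        obtain ⟨c, hc, hT⟩ := taylor3 _ _ _ _ refl1 refl2 refl3 u (u - h) (by linarith)
        simp only [show 2 * u - (u - h) = u + h from by ring,
          show 2 * u - u = u from by ring] at hT
        refine ⟨2 * u - c, ?_, by linear_combination hT⟩
        have h1 := hc.1
        have h2 := hc.2
        rw [show 2 * u - c - u = u - c from by ring, abs_of_nonpos (by linarith),
          abs_of_neg hneg]
        linarith
      · obtain ⟨c, hc, hT⟩ := taylor3 _ _ _ _ hd1 hd2 hd3 u (u + h) (by linarith)
        have h1 := hc.1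
        have h2 := hc.2
        refine ⟨c, ?_, by linear_combination hT⟩
        rw [abs_of_nonneg (by linarith), abs_of_pos hpos]
        linarith
    obtain ⟨c, hcu, heq⟩ := hmain
    have hl2 : 0 < lf2 u := by
      have : lf2 u = Real.exp u / (1 + Real.exp u) ^ 2 := rfl
      rw [this]; positivity
    refine ⟨lf3 c / lf2 u, ?_, ?_⟩
    · rw [abs_div, abs_of_pos hl2, div_le_iff₀ hl2]
      calc |lf3 c| ≤ lf2 c := lf3_abs_le c
        _ ≤ Real.exp |c - u| * lf2 u := lf2_ratio c u
        _ ≤ Real.exp |h| * lf2 u :=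
            mul_le_mul_of_nonneg_right (Real.exp_le_exp.2 hcu) hl2.le
    · have hpl : pi u = lf1 u := by rw [hpi u]; rfl
      have hp2 : pi u * (1 - pi u) = lf2 u := by
        have h2 : lf2 u = Real.exp u / (1 + Real.exp u) ^ 2 := rfl
        rw [hpi u, h2]
        have := (one_add_exp_pos u).ne'
        field_simp
        ring
      have hlog : Real.log ((1 + Real.exp (u + h)) / (1 + Real.exp u)) = lf (u + h) - lf u :=
        Real.log_div (one_add_exp_pos _).ne' (one_add_exp_pos _).ne'
      have hne2 := hl2.ne'
      rw [hlog, heq, hp2, hpl]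
      field_simp
      ring
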